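/- arXiv:0911.3713 — 3 statements merged into one kernel-verified Lean document; each statement's English description precedes it below -/
import Mathlib

section
/- If f, g : ℝ → ℝ are almost periodic functions, then the function t ↦ f(t − g(t)) is almost periodic. -/
/-- An almost periodic continuous function is uniformly continuous. -/
lemma ap_unif_cont (f : ℝ → ℝ) (hf : Continuous f)
    (hapf : ∀ ε > 0, ∃ l > 0, ∀ x : ℝ, ∃ T ∈ Set.Icc x (x + l),
      ∀ t : ℝ, |f (t + T) - f t| < ε) :
    ∀ ε > 0, ∃ δ > 0, ∀ u v : ℝ, |u - v| ≤ δ → |f u - f v| < ε := by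
  intro ε hε
  obtain ⟨l, hl, hT⟩ := hapf (ε/3) (by linarith)
  have huc : UniformContinuousOn f (Set.Icc (-1) (l+1)) :=
    isCompact_Icc.uniformContinuousOn_of_continuous hf.continuousOn
  rw [Metric.uniformContinuousOn_iff] at huc
  obtain ⟨δ, hδ, hδf⟩ := huc (ε/3) (by linarith)
  refine ⟨min (δ/2) 1, by positivity, fun u v huv => ?_⟩
  obtain ⟨T, hTmem, hTf⟩ := hT (-u)
  have h1 : u + T ∈ Set.Icc (-1:ℝ) (l+1) := by
    constructor <;> [nlinarith [hTmem.1]; nlinarith [hTmem.2]]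
  have h2 : v + T ∈ Set.Icc (-1:ℝ) (l+1) := by
    have h3 := abs_le.mp (le_trans huv (min_le_right _ _))
    constructor <;> [nlinarith [hTmem.1, h3.1, h3.2]; nlinarith [hTmem.2, h3.1, h3.2]]
  have hd : dist (u + T) (v + T) < δ := by
    rw [Real.dist_eq]
    have := le_trans huv (min_le_left _ _)
    have : |u + T - (v + T)| ≤ δ/2 := by rwa [show u + T - (v+T) = u - v by ring]
    linarith
  have hm := hδf _ h1 _ h2 hd
  rw [Real.dist_eq] at hm
  have e1 := hTf u
  have e2 := hTf v
  calc |f u - f v| = |(f u - f (u+T)) + (f (u+T) - f (v+T)) + (f (v+T) - f v)| := by ring_nf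
    _ ≤ |f u - f (u+T)| + |f (u+T) - f (v+T)| + |f (v+T) - f v| := abs_add_three _ _ _
    _ < ε := by
        rw [abs_sub_comm (f u) (f (u+T)), abs_sub_comm (f (v+T)) (f v)] at *
        linarith [abs_sub_comm (f (u+T)) (f u) ▸ e1]

/-- The set of translates of an almost periodic uniformly continuous function is
totally bounded: a finite `ε`-net of translates exists. -/
lemma ap_net (f : ℝ → ℝ)
    (huc : ∀ ε > 0, ∃ δ > 0, ∀ u v : ℝ, |u - v| ≤ δ → |f u - f v| < ε)
    (hapf : ∀ ε > 0, ∃ l > 0, ∀ x : ℝ, ∃ T ∈ Set.Icc x (x + l),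
      ∀ t : ℝ, |f (t + T) - f t| < ε) :
    ∀ ε > 0, ∃ S : Finset ℝ, ∀ h : ℝ, ∃ s ∈ S, ∀ t : ℝ, |f (t + h) - f (t + s)| ≤ ε := by
  intro ε hε
  obtain ⟨δ, hδ, hδf⟩ := huc (ε/2) (by linarith)
  obtain ⟨l, hl, hT⟩ := hapf (ε/2) (by linarith)
  refine ⟨(Finset.range (⌈l/δ⌉₊ + 1)).image (fun k : ℕ => (k : ℝ) * δ), fun h => ?_⟩
  obtain ⟨T, hTmem, hTf⟩ := hT (-h)
  set s0 := h + T with hs0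
  have hs0nn : 0 ≤ s0 := by have := hTmem.1; simp [hs0]; linarith
  have hs0le : s0 ≤ l := by have := hTmem.2; simp [hs0]; linarith
  set k := ⌊s0 / δ⌋₊ with hk
  refine ⟨(k : ℝ) * δ, ?_, fun t => ?_⟩
  · simp only [Finset.mem_image, Finset.mem_range]
    refine ⟨k, Nat.lt_succ_of_le ?_, rfl⟩
    calc k = ⌊s0/δ⌋₊ := rfl
      _ ≤ ⌊l/δ⌋₊ := Nat.floor_le_floor (by gcongr)
      _ ≤ ⌈l/δ⌉₊ := Nat.floor_le_ceil _
  · have hkle : (k:ℝ) * δ ≤ s0 := by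
      rw [hk]
      have := Nat.floor_le (a := s0/δ) (by positivity)
      calc (⌊s0/δ⌋₊ : ℝ) * δ ≤ (s0/δ) * δ := by gcongr
        _ = s0 := by field_simp
    have hklt : s0 - (k:ℝ)*δ ≤ δ := by
      have := Nat.lt_floor_add_one (s0/δ)
      have h2 : s0/δ * δ < ((k:ℝ) + 1) * δ := by rw [hk]; gcongr
      have : s0 < ((k:ℝ)+1) * δ := by rwa [div_mul_cancel₀ _ (ne_of_gt hδ)] at h2
      nlinarith
    have e1 : |f (t + h) - f (t + s0)| < ε/2 := by
      have := hTf (t + h)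
      rwa [show t + h + T = t + s0 by rw [hs0]; ring, abs_sub_comm] at this
    have e2 : |f (t + s0) - f (t + (k:ℝ)*δ)| < ε/2 := by
      apply hδf
      rw [show t + s0 - (t + (k:ℝ)*δ) = s0 - (k:ℝ)*δ by ring, abs_of_nonneg (by linarith)]
      linarith
    calc |f (t+h) - f (t + (k:ℝ)*δ)|
        ≤ |f (t+h) - f (t+s0)| + |f (t+s0) - f (t + (k:ℝ)*δ)| := abs_sub_le _ _ _
      _ ≤ ε := by linarith

/-- A joint finite `ε`-net of translates for a pair of functions. -/
lemma ap_pair_net (f g : ℝ → ℝ)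
    (hSf : ∀ ε > 0, ∃ S : Finset ℝ, ∀ h : ℝ, ∃ s ∈ S, ∀ t : ℝ, |f (t + h) - f (t + s)| ≤ ε)
    (hSg : ∀ ε > 0, ∃ S : Finset ℝ, ∀ h : ℝ, ∃ s ∈ S, ∀ t : ℝ, |g (t + h) - g (t + s)| ≤ ε) :
    ∀ ε > 0, ∃ H : Finset ℝ, ∀ h : ℝ, ∃ h' ∈ H,
      ∀ t : ℝ, |f (t + h) - f (t + h')| ≤ ε ∧ |g (t + h) - g (t + h')| ≤ ε := by
  intro ε hε
  obtain ⟨Sf, hf⟩ := hSf (ε/2) (by linarith)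
  obtain ⟨Sg, hgn⟩ := hSg (ε/2) (by linarith)
  classical
  set P : ℝ → ℝ → Prop := fun s s' => ∃ h : ℝ,
    (∀ t, |f (t + h) - f (t + s)| ≤ ε/2) ∧ (∀ t, |g (t + h) - g (t + s')| ≤ ε/2) with hP
  set c : ℝ × ℝ → ℝ := fun p => if hp : P p.1 p.2 then hp.choose else 0 with hc
  refine ⟨(Sf ×ˢ Sg).image c, fun h => ?_⟩
  obtain ⟨s, hs, hfs⟩ := hf h
  obtain ⟨s', hs', hgs⟩ := hgn h
  have hPss : P s s' := ⟨h, hfs, hgs⟩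
  refine ⟨c (s, s'), Finset.mem_image_of_mem c (Finset.mk_mem_product hs hs'), fun t => ?_⟩
  have hch : c (s, s') = hPss.choose := by simp [hc, hPss]
  obtain ⟨h1, h2⟩ := hPss.choose_spec
  rw [hch]
  constructor
  · calc |f (t + h) - f (t + hPss.choose)|
        ≤ |f (t + h) - f (t + s)| + |f (t + s) - f (t + hPss.choose)| := abs_sub_le _ _ _
      _ ≤ ε/2 + ε/2 := add_le_add (hfs t) (abs_sub_comm (f (t + hPss.choose)) (f (t+s)) ▸ h1 t)
      _ = ε := by ring
  · calc |g (t + h) - g (t + hPss.choose)|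
        ≤ |g (t + h) - g (t + s')| + |g (t + s') - g (t + hPss.choose)| := abs_sub_le _ _ _
      _ ≤ ε/2 + ε/2 := add_le_add (hgs t) (abs_sub_comm (g (t + hPss.choose)) (g (t+s')) ▸ h2 t)
      _ = ε := by ring

/-- Common almost periods: from a joint net we obtain relatively dense common
`ε`-almost periods of `f` and `g`. -/
lemma ap_common (f g : ℝ → ℝ)
    (hnet : ∀ ε > 0, ∃ H : Finset ℝ, ∀ h : ℝ, ∃ h' ∈ H,
      ∀ t : ℝ, |f (t + h) - f (t + h')| ≤ ε ∧ |g (t + h) - g (t + h')| ≤ ε) :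
    ∀ ε > 0, ∃ l > 0, ∀ x : ℝ, ∃ T ∈ Set.Icc x (x + l),
      ∀ t : ℝ, |f (t + T) - f t| < ε ∧ |g (t + T) - g t| < ε := by
  intro ε hε
  obtain ⟨H, hH⟩ := hnet (ε/2) (by linarith)
  obtain ⟨M, hM⟩ := (H.image (fun a => |a|)).exists_le
  have hM0 : 0 ≤ M := by
    obtain ⟨h0, hh0, -⟩ := hH 0
    exact le_trans (abs_nonneg h0) (hM _ (Finset.mem_image_of_mem _ hh0))
  refine ⟨2*M + 1, by linarith, fun x => ?_⟩
  obtain ⟨h', hh', hprop⟩ := hH (x + M)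
  have hMh' : |h'| ≤ M := hM _ (Finset.mem_image_of_mem _ hh')
  have habs := abs_le.mp hMh'
  refine ⟨x + M - h', ⟨by linarith [habs.2], by linarith [habs.1]⟩, fun t => ?_⟩
  have := hprop (t - h')
  rw [show t - h' + (x + M) = t + (x + M - h') by ring, show t - h' + h' = t by ring] at this
  exact ⟨lt_of_le_of_lt this.1 (by linarith), lt_of_le_of_lt this.2 (by linarith)⟩

/-- If `f` and `g` are almost periodic, then `t ↦ f (t - g t)` is almost periodic. -/
theorem almost_periodic_comp_sub
    (f g : ℝ → ℝ) (hf : Continuous f) (hg : Continuous g)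
    (hapf : ∀ ε > 0, ∃ l > 0, ∀ x : ℝ, ∃ T ∈ Set.Icc x (x + l),
      ∀ t : ℝ, |f (t + T) - f t| < ε)
    (hapg : ∀ ε > 0, ∃ l > 0, ∀ x : ℝ, ∃ T ∈ Set.Icc x (x + l),
      ∀ t : ℝ, |g (t + T) - g t| < ε) :
    ∀ ε > 0, ∃ l > 0, ∀ x : ℝ, ∃ T ∈ Set.Icc x (x + l),
      ∀ t : ℝ, |f (t + T - g (t + T)) - f (t - g t)| < ε := by
  have hucf := ap_unif_cont f hf hapf
  have hucg := ap_unif_cont g hg hapg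
  have hcommon := ap_common f g
    (ap_pair_net f g (ap_net f hucf hapf) (ap_net g hucg hapg))
  intro ε hε
  obtain ⟨δ, hδ, hδf⟩ := hucf (ε/2) (by linarith)
  obtain ⟨l, hl, hT⟩ := hcommon (min (ε/2) δ) (lt_min (by linarith) hδ)
  refine ⟨l, hl, fun x => ?_⟩
  obtain ⟨T, hTmem, hTfg⟩ := hT x
  refine ⟨T, hTmem, fun t => ?_⟩
  obtain ⟨hTf, hTg⟩ := hTfg t
  have hg' : |g (t + T) - g t| < δ := lt_of_lt_of_le hTg (min_le_right _ _)
  have e1 : |f (t + T - g (t + T)) - f (t + T - g t)| < ε/2 := by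
    apply hδf
    rw [show t + T - g (t+T) - (t + T - g t) = -(g (t+T) - g t) by ring, abs_neg]
    exact le_of_lt hg'
  have e2 : |f (t + T - g t) - f (t - g t)| < ε/2 := by
    obtain ⟨hTf', -⟩ := hTfg (t - g t)
    rw [show t - g t + T = t + T - g t by ring] at hTf'
    exact lt_of_lt_of_le hTf' (le_trans (min_le_left _ _) le_rfl)
  calc |f (t + T - g (t+T)) - f (t - g t)|
      ≤ |f (t + T - g (t+T)) - f (t + T - g t)| + |f (t + T - g t) - f (t - g t)| :=
        abs_sub_le _ _ _
    _ < ε := by linarith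
end

section
/- If f₁, …, f_N : ℝ → ℝ are almost periodic functions, then for every ε > 0 the set of common ε-almost periods of f₁, …, f_N is relatively dense in ℝ. -/
/-- `f` is almost periodic in the relative-density sense. -/
private def APR (f : ℝ → ℝ) : Prop :=
  ∀ ε > 0, ∃ l > 0, ∀ x : ℝ, ∃ T ∈ Set.Icc x (x + l), ∀ t : ℝ, |f (t + T) - f t| < ε

/-- An almost periodic continuous function is uniformly continuous. -/
private lemma apr_uc {f : ℝ → ℝ} (hf : Continuous f) (hap : APR f) :
    ∀ ε > 0, ∃ δ > 0, ∀ a b : ℝ, |a - b| < δ → |f a - f b| < ε := by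
  intro ε hε
  obtain ⟨l, hl, hT⟩ := hap (ε / 3) (by positivity)
  have hc : UniformContinuousOn f (Set.Icc (-1) (l + 1)) :=
    isCompact_Icc.uniformContinuousOn_of_continuous hf.continuousOn
  rw [Metric.uniformContinuousOn_iff] at hc
  obtain ⟨δ₀, hδ₀, h₀⟩ := hc (ε / 3) (by positivity)
  refine ⟨min δ₀ 1, by positivity, ?_⟩
  intro a b hab
  obtain ⟨T, hTm, hTp⟩ := hT (-b)
  have hbT : b + T ∈ Set.Icc (-1 : ℝ) (l + 1) := by
    simp only [Set.mem_Icc] at hTm ⊢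
    constructor <;> nlinarith [hTm.1, hTm.2, hl]
  have haT : a + T ∈ Set.Icc (-1 : ℝ) (l + 1) := by
    simp only [Set.mem_Icc] at hTm ⊢
    have h1 : |a - b| < 1 := lt_of_lt_of_le hab (min_le_right _ _)
    rw [abs_lt] at h1
    constructor <;> nlinarith [hTm.1, hTm.2, hl]
  have hmid : |f (a + T) - f (b + T)| < ε / 3 := by
    have := h₀ (a + T) haT (b + T) hbT (by
      rw [Real.dist_eq]
      have : a + T - (b + T) = a - b := by ring
      rw [this]
      exact lt_of_lt_of_le hab (min_le_left _ _))
    rwa [Real.dist_eq] at this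
  have h1 := hTp a
  have h2 := hTp b
  calc |f a - f b| = |(-(f (a + T) - f a)) + (f (a + T) - f (b + T)) + (f (b + T) - f b)| := by
        ring_nf
      _ ≤ |(-(f (a + T) - f a)) + (f (a + T) - f (b + T))| + |f (b + T) - f b| := abs_add_le _ _
      _ ≤ |(-(f (a + T) - f a))| + |f (a + T) - f (b + T)| + |f (b + T) - f b| := by
        gcongr; exact abs_add_le _ _
      _ < ε / 3 + ε / 3 + ε / 3 := by rw [abs_neg]; gcongr
      _ = ε := by ring

/-- From any sequence of shifts one can extract a subsequence along which the
translates of an almost periodic function are pairwise uniformly `ε`-close. -/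
private lemma apr_extract {f : ℝ → ℝ} (hf : Continuous f) (hap : APR f)
    {ε : ℝ} (hε : 0 < ε) (u : ℕ → ℝ) :
    ∃ g : ℕ → ℕ, StrictMono g ∧
      ∀ n m, ∀ t : ℝ, |f (t + u (g n)) - f (t + u (g m))| < ε := by
  obtain ⟨l, hl, hT⟩ := hap (ε / 3) (by positivity)
  obtain ⟨δ, hδ, hδ'⟩ := apr_uc hf hap (ε / 3) (by positivity)
  -- choose almost periods
  choose τ hτm hτp using fun n => hT (-(u n))
  set r : ℕ → ℝ := fun n => u n + τ n with hr
  have hr0 : ∀ n, 0 ≤ r n := by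
    intro n
    have := (hτm n).1
    simp only [hr]; linarith
  have hrl : ∀ n, r n ≤ l := by
    intro n
    have := (hτm n).2
    simp only [hr]; linarith
  -- translates by u n and by r n are uniformly ε/3 close
  have hclose : ∀ n, ∀ t : ℝ, |f (t + u n) - f (t + r n)| < ε / 3 := by
    intro n t
    have := hτp n (t + u n)
    have he : t + u n + τ n = t + r n := by simp only [hr]; ring
    rw [he] at this
    rw [abs_sub_comm]
    exact this
  -- pigeonhole on r
  set K : ℕ := ⌈l / δ⌉₊ with hK
  have hfib : ∀ n, ⌊r n / δ⌋₊ < K + 1 := by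
    intro n
    have h1 : r n / δ ≤ l / δ := by gcongr; exact hrl n
    calc ⌊r n / δ⌋₊ ≤ ⌊l / δ⌋₊ := Nat.floor_le_floor h1
      _ ≤ ⌈l / δ⌉₊ := Nat.floor_le_ceil _
      _ < K + 1 := by omega
  set c : ℕ → Fin (K + 1) := fun n => ⟨⌊r n / δ⌋₊, hfib n⟩ with hc
  obtain ⟨v, hv⟩ := Finite.exists_infinite_fiber c
  haveI : Infinite (c ⁻¹' {v} : Set ℕ) := hv
  set g : ℕ → ℕ := fun n => ((Nat.Subtype.orderIsoOfNat (c ⁻¹' {v}) n : ℕ)) with hg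
  have hgmono : StrictMono g := by
    intro a b hab
    have := (Nat.Subtype.orderIsoOfNat (c ⁻¹' {v})).strictMono hab
    exact this
  have hgfib : ∀ n, c (g n) = v := fun n => (Nat.Subtype.orderIsoOfNat (c ⁻¹' {v}) n).2
  refine ⟨g, hgmono, ?_⟩
  intro n m t
  -- r (g n) and r (g m) are δ-close
  have hrd : |r (g n) - r (g m)| < δ := by
    have h1 : ⌊r (g n) / δ⌋₊ = ⌊r (g m) / δ⌋₊ := by
      have := hgfib n; have h2 := hgfib m
      rw [← h2] at this
      exact Fin.mk.inj_iff.mp this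
    have hb : ∀ k, (⌊r k / δ⌋₊ : ℝ) ≤ r k / δ ∧ r k / δ < ⌊r k / δ⌋₊ + 1 := by
      intro k
      have hnn : 0 ≤ r k / δ := div_nonneg (hr0 k) hδ.le
      exact ⟨Nat.floor_le hnn, Nat.lt_floor_add_one _⟩
    obtain ⟨a1, a2⟩ := hb (g n)
    obtain ⟨b1, b2⟩ := hb (g m)
    rw [h1] at a1 a2
    have hup : (r (g n) - r (g m)) / δ < 1 := by
      have : r (g n) / δ - r (g m) / δ < 1 := by linarith
      have h3 : r (g n) / δ - r (g m) / δ = (r (g n) - r (g m)) / δ := by ring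
      linarith [h3 ▸ this]
    have hlo : -(1:ℝ) < (r (g n) - r (g m)) / δ := by
      have : -(1:ℝ) < r (g n) / δ - r (g m) / δ := by linarith
      have h3 : r (g n) / δ - r (g m) / δ = (r (g n) - r (g m)) / δ := by ring
      linarith [h3 ▸ this]
    rw [abs_lt]
    constructor
    · have := (lt_div_iff₀ hδ).mp hlo
      linarith
    · have := (div_lt_one hδ).mp hup
      linarith
  have hmid : |f (t + r (g n)) - f (t + r (g m))| < ε / 3 := by
    apply hδ'
    have : t + r (g n) - (t + r (g m)) = r (g n) - r (g m) := by ring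
    rw [this]; exact hrd
  have h1 := hclose (g n) t
  have h2 := hclose (g m) t
  calc |f (t + u (g n)) - f (t + u (g m))|
      = |(f (t + u (g n)) - f (t + r (g n))) + (f (t + r (g n)) - f (t + r (g m)))
          + (f (t + r (g m)) - f (t + u (g m)))| := by ring_nf
    _ ≤ |(f (t + u (g n)) - f (t + r (g n))) + (f (t + r (g n)) - f (t + r (g m)))|
          + |f (t + r (g m)) - f (t + u (g m))| := abs_add_le _ _
    _ ≤ |f (t + u (g n)) - f (t + r (g n))| + |f (t + r (g n)) - f (t + r (g m))|
          + |f (t + r (g m)) - f (t + u (g m))| := by gcongr; exact abs_add_le _ _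
    _ < ε / 3 + ε / 3 + ε / 3 := by
        gcongr
        rw [abs_sub_comm]; exact h2
    _ = ε := by ring

/-- Iterated extraction over a finite family. -/
private lemma apr_extract_family {N : ℕ} (f : Fin N → ℝ → ℝ)
    (hf : ∀ i, Continuous (f i)) (hap : ∀ i, APR (f i))
    {ε : ℝ} (hε : 0 < ε) (u : ℕ → ℝ) (S : Finset (Fin N)) :
    ∃ g : ℕ → ℕ, StrictMono g ∧
      ∀ i ∈ S, ∀ n m, ∀ t : ℝ, |f i (t + u (g n)) - f i (t + u (g m))| < ε := by
  induction S using Finset.induction_on with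
  | empty => exact ⟨id, strictMono_id, by simp⟩
  | @insert j S hj ih =>
    obtain ⟨g, hg, hgS⟩ := ih
    obtain ⟨g', hg', hg'j⟩ := apr_extract (hf j) (hap j) hε (u ∘ g)
    refine ⟨g ∘ g', hg.comp hg', ?_⟩
    intro i hi n m t
    rcases Finset.mem_insert.mp hi with h | h
    · subst h
      exact hg'j n m t
    · exact hgS i h (g' n) (g' m) t

/-- The recursively constructed sequence of shifts, with running bound. -/
private noncomputable def badSeq (x : ℝ → ℝ) : ℕ → ℝ × ℝ
  | 0 => (0, 1)
  | n + 1 =>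
    let p := badSeq x n
    (x p.2 + p.2, max p.2 |x p.2 + p.2| + 1)

private lemma badSeq_one_le_snd (x : ℝ → ℝ) (n : ℕ) : 1 ≤ (badSeq x n).2 := by
  induction n with
  | zero => simp [badSeq]
  | succ n ih =>
    simp only [badSeq]
    have := le_max_left (badSeq x n).2 |x (badSeq x n).2 + (badSeq x n).2|
    linarith

private lemma badSeq_abs_fst_le (x : ℝ → ℝ) (n : ℕ) : |(badSeq x n).1| ≤ (badSeq x n).2 := by
  cases n with
  | zero => simp [badSeq]
  | succ n =>
    simp only [badSeq]
    have := le_max_right (badSeq x n).2 |x (badSeq x n).2 + (badSeq x n).2|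
    linarith

private lemma badSeq_snd_mono (x : ℝ → ℝ) : Monotone fun n => (badSeq x n).2 := by
  apply monotone_nat_of_le_succ
  intro n
  simp only [badSeq]
  have := le_max_left (badSeq x n).2 |x (badSeq x n).2 + (badSeq x n).2|
  linarith

private lemma badSeq_abs_le_of_le (x : ℝ → ℝ) {m n : ℕ} (h : m ≤ n) :
    |(badSeq x m).1| ≤ (badSeq x n).2 :=
  (badSeq_abs_fst_le x m).trans (badSeq_snd_mono x h)

private lemma badSeq_mem (x : ℝ → ℝ) {m n : ℕ} (h : m ≤ n) :
    (badSeq x (n + 1)).1 - (badSeq x m).1 ∈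
      Set.Icc (x (badSeq x n).2) (x (badSeq x n).2 + 2 * (badSeq x n).2) := by
  have h1 := badSeq_abs_le_of_le x h
  rw [abs_le] at h1
  constructor <;> · simp only [badSeq]; linarith [h1.1, h1.2]

/-- Finitely many almost periodic functions have a relatively dense set of
common `ε`-almost periods. -/
theorem common_almost_periods_relatively_dense
    (N : ℕ) (f : Fin N → ℝ → ℝ) (hf : ∀ i, Continuous (f i))
    (hap : ∀ i, ∀ ε > 0, ∃ l > 0, ∀ x : ℝ, ∃ T ∈ Set.Icc x (x + l),
      ∀ t : ℝ, |f i (t + T) - f i t| < ε) :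
    ∀ ε > 0, ∃ l > 0, ∀ x : ℝ, ∃ T ∈ Set.Icc x (x + l),
      ∀ i, ∀ t : ℝ, |f i (t + T) - f i t| < ε := by
  have hap' : ∀ i, APR (f i) := hap
  intro ε hε
  by_contra hcon
  push_neg at hcon
  -- hcon : ∀ l > 0, ∃ x, ∀ T ∈ Icc x (x+l), ∃ i t, ε ≤ |f i (t+T) - f i t|
  set xf : ℝ → ℝ := fun M =>
    if h : (0:ℝ) < 2 * M then Classical.choose (hcon (2 * M) h) else 0 with hxfdef
  have hxf : ∀ M : ℝ, 0 < M → ∀ T ∈ Set.Icc (xf M) (xf M + 2 * M),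
      ∃ i, ∃ t : ℝ, ε ≤ |f i (t + T) - f i t| := by
    intro M hM
    have h2 : (0:ℝ) < 2 * M := by linarith
    have : xf M = Classical.choose (hcon (2 * M) h2) := by
      simp only [hxfdef, dif_pos h2]
    rw [this]
    exact Classical.choose_spec (hcon (2 * M) h2)
  set a : ℕ → ℝ := fun n => (badSeq xf n).1 with hadef
  have hbadpair : ∀ m n : ℕ, m < n →
      ∃ i, ∃ t : ℝ, ε ≤ |f i (t + (a n - a m)) - f i t| := by
    intro m n hmn
    obtain ⟨k, rfl⟩ : ∃ k, n = k + 1 := ⟨n - 1, by omega⟩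
    have hmk : m ≤ k := by omega
    have hM : (0:ℝ) < (badSeq xf k).2 := lt_of_lt_of_le one_pos (badSeq_one_le_snd xf k)
    exact hxf (badSeq xf k).2 hM _ (badSeq_mem xf hmk)
  obtain ⟨g, hg, hgall⟩ := apr_extract_family f hf hap' hε a Finset.univ
  obtain ⟨i, t0, hit⟩ := hbadpair (g 0) (g 1) (hg Nat.zero_lt_one)
  have := hgall i (Finset.mem_univ i) 1 0 (t0 - a (g 0))
  have e1 : t0 - a (g 0) + a (g 1) = t0 + (a (g 1) - a (g 0)) := by ring
  have e2 : t0 - a (g 0) + a (g 0) = t0 := by ring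
  rw [e1, e2] at this
  exact absurd hit (not_le.mpr this)
end

section
/- Halanay inequality: Let V : [−κ, ∞) → [0, ∞) be continuous with upper right Dini derivative satisfying D⁺V(t) ≤ −α·V(t) + β·sup_{t−κ ≤ s ≤ t} V(s) for all t ≥ 0, where α > β > 0 and κ > 0. Then there exists γ > 0 (the unique positive root of γ = α − β·e^{γκ}) such that V(t) ≤ (sup_{−κ ≤ s ≤ 0} V(s))·e^{−γt} for all t ≥ 0. -/
open Filter Set

/-- Key comparison lemma for Halanay's inequality: if `V` strictly lies below `A` on the
initial interval and `β * e^{γ'κ} < α - γ'`, then `V t ≤ A e^{-γ' t}` for `t ≥ 0`. -/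
lemma halanay_key
    (κ α β : ℝ) (hκ : 0 < κ) (hβ : 0 < β)
    (V : ℝ → ℝ) (hVcont : ContinuousOn V (Set.Ici (-κ)))
    (hVnonneg : ∀ t, 0 ≤ V t)
    (hdini : ∀ t ≥ 0,
      limsup (fun h => (V (t + h) - V t) / h) (nhdsWithin 0 (Set.Ioi 0))
        ≤ -α * V t + β * sSup (V '' Set.Icc (t - κ) t))
    (γ' A : ℝ) (hγ'0 : 0 < γ')
    (hA : ∀ s ∈ Set.Icc (-κ) 0, V s < A)
    (hstrict : β * Real.exp (γ' * κ) < α - γ') :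
    ∀ t ≥ 0, V t ≤ A * Real.exp (-γ' * t) := by
  set u : ℝ → ℝ := fun t => A * Real.exp (-γ' * t) with hu
  by_contra hcon
  push_neg at hcon
  obtain ⟨t₀, ht₀0, ht₀⟩ := hcon
  have hV0 : V 0 < A := hA 0 ⟨by linarith, le_refl 0⟩
  have hApos : 0 < A := lt_of_le_of_lt (hVnonneg 0) hV0
  have hu0 : u 0 = A := by simp [hu]
  -- the set of times up to which V ≤ u
  set T : Set ℝ := {t | t ∈ Set.Icc 0 t₀ ∧ ∀ s ∈ Set.Icc 0 t, V s ≤ u s} with hT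
  have h0T : (0 : ℝ) ∈ T := by
    refine ⟨⟨le_refl 0, ht₀0⟩, ?_⟩
    intro s hs
    have : s = 0 := le_antisymm hs.2 hs.1
    rw [this, hu0]
    exact hV0.le
  have hTne : T.Nonempty := ⟨0, h0T⟩
  have hTbdd : BddAbove T := ⟨t₀, fun t ht => ht.1.2⟩
  set t₁ : ℝ := sSup T with ht₁
  have h0t₁ : 0 ≤ t₁ := le_csSup hTbdd h0T
  have ht₁t₀ : t₁ ≤ t₀ := csSup_le hTne (fun t ht => ht.1.2)
  have hbefore : ∀ s, 0 ≤ s → s < t₁ → V s ≤ u s := by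
    intro s hs0 hs
    obtain ⟨t, htT, hst⟩ := exists_lt_of_lt_csSup hTne hs
    exact htT.2 s ⟨hs0, hst.le⟩
  -- continuity of V at points of [0, ∞)
  have hVat : ∀ t : ℝ, 0 ≤ t → ContinuousAt V t := by
    intro t ht
    exact hVcont.continuousAt (Ici_mem_nhds (by linarith))
  have hucont : Continuous u :=
    continuous_const.mul (Real.continuous_exp.comp (continuous_const.mul continuous_id))
  -- V t₁ ≤ u t₁
  have hVle : V t₁ ≤ u t₁ := by
    rcases eq_or_lt_of_le h0t₁ with heq | hlt
    · rw [← heq, hu0]; exact hV0.le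
    · have hne : (nhdsWithin t₁ (Set.Ioo 0 t₁)).NeBot := by
        refine mem_closure_iff_nhdsWithin_neBot.mp ?_
        rw [closure_Ioo (ne_of_lt hlt)]
        exact ⟨hlt.le, le_refl t₁⟩
      have htend : Filter.Tendsto (fun s => u s - V s) (nhdsWithin t₁ (Set.Ioo 0 t₁))
          (nhds (u t₁ - V t₁)) := by
        apply Filter.Tendsto.mono_left _ nhdsWithin_le_nhds
        exact (hucont.continuousAt.sub (hVat t₁ h0t₁))
      have hev : ∀ᶠ s in nhdsWithin t₁ (Set.Ioo 0 t₁), 0 ≤ u s - V s := by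
        filter_upwards [self_mem_nhdsWithin] with s hs
        have := hbefore s hs.1.le hs.2
        linarith
      have := ge_of_tendsto htend hev
      linarith
  -- t₁ < t₀
  have ht₁lt : t₁ < t₀ := by
    rcases eq_or_lt_of_le ht₁t₀ with heq | h
    · exfalso; rw [heq] at hVle; simp only [hu] at hVle; linarith
    · exact h
  -- frequent crossing to the right of t₁
  have hfreq : ∀ h₀ > 0, ∃ s, t₁ < s ∧ s ≤ t₁ + h₀ ∧ u s < V s := by
    intro h₀ hh₀
    by_contra hcon2
    push_neg at hcon2
    set t₂ : ℝ := min (t₁ + h₀) t₀ with ht₂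
    have ht₂gt : t₁ < t₂ := lt_min (by linarith) ht₁lt
    have ht₂T : t₂ ∈ T := by
      refine ⟨⟨by linarith, min_le_right _ _⟩, ?_⟩
      intro s hs
      rcases lt_or_ge s t₁ with h | h
      · exact hbefore s hs.1 h
      rcases eq_or_lt_of_le h with heq | h
      · rw [← heq]; exact hVle
      · exact hcon2 s h (le_trans hs.2 (min_le_left _ _))
    have := le_csSup hTbdd ht₂T
    linarith
  -- V t₁ ≥ u t₁
  have hVge : u t₁ ≤ V t₁ := by
    set S : Set ℝ := {s | u s < V s ∧ t₁ < s} with hS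
    have hne : (nhdsWithin t₁ S).NeBot := by
      refine mem_closure_iff_nhdsWithin_neBot.mp ?_
      rw [Metric.mem_closure_iff]
      intro ε hε
      obtain ⟨s, hs1, hs2, hs3⟩ := hfreq (ε / 2) (by linarith)
      refine ⟨s, ⟨hs3, hs1⟩, ?_⟩
      rw [Real.dist_eq, abs_sub_comm, abs_of_pos (by linarith)]
      linarith
    have htend : Filter.Tendsto (fun s => V s - u s) (nhdsWithin t₁ S)
        (nhds (V t₁ - u t₁)) := by
      apply Filter.Tendsto.mono_left _ nhdsWithin_le_nhds
      exact ((hVat t₁ h0t₁).sub hucont.continuousAt)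
    have hev : ∀ᶠ s in nhdsWithin t₁ S, 0 ≤ V s - u s := by
      filter_upwards [self_mem_nhdsWithin] with s hs
      linarith [hs.1]
    have := ge_of_tendsto htend hev
    linarith
  have hVt₁ : V t₁ = u t₁ := le_antisymm hVle hVge
  clear_value t₁
  clear hVle hVge hTne hTbdd h0T ht₁
  -- the slope lower bound
  set c : ℝ := -γ' * (A * Real.exp (-γ' * t₁)) with hc
  have hcneg : c < 0 := by
    have := Real.exp_pos (-γ' * t₁)
    have : 0 < A * Real.exp (-γ' * t₁) := by positivity
    nlinarith
  have hfreq' : ∃ᶠ h in nhdsWithin 0 (Set.Ioi 0), c ≤ (V (t₁ + h) - V t₁) / h := by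
    rw [Filter.frequently_iff]
    intro U hU
    rw [Metric.mem_nhdsWithin_iff] at hU
    obtain ⟨ε, hε, hball⟩ := hU
    obtain ⟨s, hs1, hs2, hs3⟩ := hfreq (ε / 2) (by linarith)
    set h : ℝ := s - t₁ with hh
    have hhpos : 0 < h := by linarith
    refine ⟨h, hball ⟨?_, hhpos⟩, ?_⟩
    · rw [Metric.mem_ball, Real.dist_eq, sub_zero, abs_of_pos hhpos]
      linarith
    · have hts : t₁ + h = s := by ring
      rw [hts, hVt₁]
      rw [le_div_iff₀ hhpos]
      have key : u s - u t₁ ≥ c * h := by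
        have hs' : s = t₁ + h := by ring
        have : Real.exp (-γ' * s) = Real.exp (-γ' * t₁) * Real.exp (-γ' * h) := by
          rw [← Real.exp_add]; congr 1; rw [hs']; ring
        have hexp : -γ' * h + 1 ≤ Real.exp (-γ' * h) := Real.add_one_le_exp _
        have hE : 0 < Real.exp (-γ' * t₁) := Real.exp_pos _
        simp only [hu, hc]
        rw [this]
        nlinarith
      nlinarith [hs3]
  -- upper bound on the sup over the delay window
  have himgne : (V '' Set.Icc (t₁ - κ) t₁).Nonempty :=
    (Set.nonempty_Icc.mpr (by linarith)).image V
  have hsup : sSup (V '' Set.Icc (t₁ - κ) t₁) ≤ A * Real.exp (-γ' * (t₁ - κ)) := by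
    apply csSup_le himgne
    rintro y ⟨s, hs, rfl⟩
    have h1 : V s ≤ A * Real.exp (-γ' * s) := by
      rcases le_or_gt s 0 with h | h
      · have : V s < A := hA s ⟨by linarith [hs.1], h⟩
        have : Real.exp 0 ≤ Real.exp (-γ' * s) := by
          apply Real.exp_le_exp.mpr; nlinarith
        rw [Real.exp_zero] at this
        nlinarith
      · rcases lt_or_eq_of_le hs.2 with h' | h'
        · exact hbefore s h.le h'
        · rw [h']; exact le_of_eq hVt₁
    have h2 : Real.exp (-γ' * s) ≤ Real.exp (-γ' * (t₁ - κ)) := by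
      apply Real.exp_le_exp.mpr; nlinarith [hs.1]
    nlinarith [Real.exp_pos (-γ' * s)]
  -- the Dini derivative bound gives limsup < c
  have hL : limsup (fun h => (V (t₁ + h) - V t₁) / h) (nhdsWithin 0 (Set.Ioi 0)) < c := by
    have hmid : -α * V t₁ + β * sSup (V '' Set.Icc (t₁ - κ) t₁)
        ≤ -α * V t₁ + β * (A * Real.exp (-γ' * (t₁ - κ))) := by
      have := hsup
      nlinarith
    have hfin : -α * V t₁ + β * (A * Real.exp (-γ' * (t₁ - κ))) < c := by
      have hE : Real.exp (-γ' * (t₁ - κ)) = Real.exp (-γ' * t₁) * Real.exp (γ' * κ) := by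
        rw [← Real.exp_add]; congr 1; ring
      rw [hVt₁, hE]
      simp only [hu, hc]
      have h1 : 0 < Real.exp (-γ' * t₁) := Real.exp_pos _
      nlinarith [mul_pos (show (0:ℝ) < α - γ' - β * Real.exp (γ' * κ) by nlinarith)
        (mul_pos hApos h1)]
    exact lt_of_le_of_lt (le_trans (hdini t₁ h0t₁) hmid) hfin
  -- contradiction
  by_cases hbdd : Filter.IsBoundedUnder (· ≤ ·) (nhdsWithin 0 (Set.Ioi 0))
      (fun h => (V (t₁ + h) - V t₁) / h)
  · have := le_limsup_of_frequently_le hfreq' hbdd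
    linarith
  · have hempty : {a : ℝ | ∀ᶠ h in nhdsWithin 0 (Set.Ioi 0), (V (t₁ + h) - V t₁) / h ≤ a} = ∅ := by
      rw [Set.eq_empty_iff_forall_notMem]
      intro a ha
      exact hbdd ⟨a, by simpa [Filter.eventually_map] using ha⟩
    have : limsup (fun h => (V (t₁ + h) - V t₁) / h) (nhdsWithin 0 (Set.Ioi 0)) = 0 := by
      rw [Filter.limsup_eq, hempty, Real.sInf_empty]
    rw [this] at hL
    linarith

set_option maxHeartbeats 400000 in
open Filter in
/-- Halanay inequality. -/
theorem halanay_inequality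
    (κ α β : ℝ) (hκ : 0 < κ) (hβ : 0 < β) (hαβ : β < α)
    (V : ℝ → ℝ) (hVcont : ContinuousOn V (Set.Ici (-κ)))
    (hVnonneg : ∀ t, 0 ≤ V t)
    (hdini : ∀ t ≥ 0,
      limsup (fun h => (V (t + h) - V t) / h) (nhdsWithin 0 (Set.Ioi 0))
        ≤ -α * V t + β * sSup (V '' Set.Icc (t - κ) t)) :
    ∃ γ > 0, γ = α - β * Real.exp (γ * κ) ∧
      ∀ t ≥ 0, V t ≤ sSup (V '' Set.Icc (-κ) 0) * Real.exp (-γ * t) := by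
  have hα : 0 < α := lt_trans hβ hαβ
  -- existence of γ by the intermediate value theorem
  set f : ℝ → ℝ := fun θ => α - θ - β * Real.exp (θ * κ) with hf
  have hfcont : ContinuousOn f (Set.Icc 0 α) := by
    apply Continuous.continuousOn
    exact (continuous_const.sub continuous_id).sub
      (continuous_const.mul (Real.continuous_exp.comp (continuous_id.mul continuous_const)))
  have hf0 : f 0 = α - β := by simp [hf]
  have hfα : f α < 0 := by
    have h1 : (1:ℝ) ≤ Real.exp (α * κ) := Real.one_le_exp (by positivity)
    simp only [hf]
    nlinarith
  have hIVT := intermediate_value_Ioo' (le_of_lt hα) hfcont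
  have h0mem : (0:ℝ) ∈ Set.Ioo (f α) (f 0) := by
    constructor
    · exact hfα
    · rw [hf0]; linarith
  obtain ⟨γ, hγmem, hfγ⟩ := hIVT h0mem
  have hγpos : 0 < γ := hγmem.1
  have hγα : γ < α := hγmem.2
  have hγeq : γ = α - β * Real.exp (γ * κ) := by
    simp only [hf] at hfγ
    linarith
  refine ⟨γ, hγpos, hγeq, ?_⟩
  -- the supremum over the initial interval
  set M : ℝ := sSup (V '' Set.Icc (-κ) 0) with hM
  have hIccne : (Set.Icc (-κ) (0:ℝ)).Nonempty := Set.nonempty_Icc.mpr (by linarith)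
  have hbdd : BddAbove (V '' Set.Icc (-κ) 0) := by
    apply IsCompact.bddAbove
    exact (isCompact_Icc.image_of_continuousOn (hVcont.mono Set.Icc_subset_Ici_self))
  have hMb : ∀ s ∈ Set.Icc (-κ) (0:ℝ), V s ≤ M := fun s hs =>
    le_csSup hbdd (Set.mem_image_of_mem V hs)
  have hM0 : 0 ≤ M := le_trans (hVnonneg 0) (hMb 0 ⟨by linarith, le_refl 0⟩)
  clear_value M
  clear_value f
  -- apply the key lemma for each γ' < γ
  have key : ∀ γ' : ℝ, 0 < γ' → γ' < γ → ∀ t ≥ 0,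
      V t ≤ (M + (γ - γ')) * Real.exp (-γ' * t) := by
    intro γ' h0 h1
    apply halanay_key κ α β hκ hβ V hVcont hVnonneg hdini γ' _ h0
    · intro s hs
      have := hMb s hs
      linarith
    · have : Real.exp (γ' * κ) < Real.exp (γ * κ) := by
        apply Real.exp_lt_exp.mpr
        nlinarith
      nlinarith
  -- pass to the limit γ' → γ
  intro t ht
  have htend : Filter.Tendsto
      (fun n : ℕ => (M + γ / (n + 1)) * Real.exp (-(γ - γ / (n + 1)) * t))
      Filter.atTop (nhds (M * Real.exp (-γ * t))) := by
    have h1 : Filter.Tendsto (fun n : ℕ => γ / (n + 1)) Filter.atTop (nhds 0) :=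
      tendsto_const_nhds.div_atTop (tendsto_natCast_atTop_atTop.atTop_add tendsto_const_nhds)
    have hφ : Continuous (fun x : ℝ => (M + x) * Real.exp (-(γ - x) * t)) := by
      apply Continuous.mul
      · exact continuous_const.add continuous_id
      · exact Real.continuous_exp.comp ((continuous_const.sub continuous_id).neg.mul
          continuous_const)
    have h2 := (hφ.tendsto 0).comp h1
    have h0 : M * Real.exp (-γ * t) = (M + 0) * Real.exp (-(γ - 0) * t) := by norm_num
    rw [h0]
    exact h2
  refine ge_of_tendsto htend ?_
  filter_upwards [Filter.eventually_ge_atTop 1] with n hn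
  have hn1 : (1:ℝ) ≤ (n:ℝ) := by exact_mod_cast hn
  have hpos : (0:ℝ) < (n:ℝ) + 1 := by linarith
  have hx0 : 0 < γ / (n + 1) := div_pos hγpos hpos
  have hxγ : γ / (n + 1) < γ := by
    rw [div_lt_iff₀ hpos]
    exact lt_mul_of_one_lt_right hγpos (by linarith)
  have := key (γ - γ / (n + 1)) (by linarith) (by linarith) t ht
  calc V t ≤ (M + (γ - (γ - γ / (n + 1)))) * Real.exp (-(γ - γ / (n + 1)) * t) := this
    _ = (M + γ / (↑n + 1)) * Real.exp (-(γ - γ / (↑n + 1)) * t) := by ring_nf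
end
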